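/- Let Z ⊆ ℝ^d be a convex open set and let h : Z → ℝ^d be continuously differentiable with invertible differential Dh(z) at every z ∈ Z. If T, S ⊆ {1,…,d} are such that for every i ∈ T the component h_i depends only on the coordinates in S, then |T| ≤ |S|. -/

import Mathlib

/-- A function `φ` defined on (a subset) `Z ⊆ ℝ^d` *depends only on the coordinates in `S`*
if `φ z = φ z'` for all `z, z' ∈ Z` agreeing on every coordinate in `S`. -/
def DependsOnlyOn {d : ℕ} {Y : Type*} (Z : Set (Fin d → ℝ)) (φ : (Fin d → ℝ) → Y)
    (S : Set (Fin d)) : Prop :=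
  ∀ z ∈ Z, ∀ z' ∈ Z, (∀ i ∈ S, z i = z' i) → φ z = φ z'

/-- Let `Z ⊆ ℝ^d` be a (nonempty) convex open set and `h : Z → ℝ^d`
continuously differentiable with invertible differential at every point of `Z`. If every
component `hᵢ`, `i ∈ T`, depends only on the coordinates in `S`, then `|T| ≤ |S|`. -/
theorem card_le_of_dependsOnlyOn {d : ℕ} {Z : Set (Fin d → ℝ)}
    (hZopen : IsOpen Z) (hZconv : Convex ℝ Z) (hZne : Z.Nonempty)
    (h : (Fin d → ℝ) → (Fin d → ℝ)) (hC1 : ContDiffOn ℝ 1 h Z)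
    (hinv : ∀ z ∈ Z, Function.Bijective (fderiv ℝ h z))
    (T S : Finset (Fin d))
    (hdep : ∀ i ∈ T, DependsOnlyOn Z (fun z => h z i) (S : Set (Fin d))) :
    T.card ≤ S.card := by
  classical
  obtain ⟨z₀, hz₀⟩ := hZne
  set D := fderiv ℝ h z₀ with hDdef
  have hdiff : HasFDerivAt h D z₀ :=
    ((hC1.contDiffAt (hZopen.mem_nhds hz₀)).differentiableAt one_ne_zero).hasFDerivAt
  -- Key: the differential kills directions supported outside S, in components of T.
  have key : ∀ v : Fin d → ℝ, (∀ j ∈ S, v j = 0) → ∀ i ∈ T, D v i = 0 := by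
    intro v hv i hi
    have h0 : z₀ + (0:ℝ) • v = z₀ := by simp
    have hc : HasDerivAt (fun t : ℝ => z₀ + t • v) v 0 := by
      simpa using ((hasDerivAt_id (0:ℝ)).smul_const v).const_add z₀
    have hcomp : HasDerivAt (fun t : ℝ => h (z₀ + t • v)) (D v) 0 := by
      have hdiff' : HasFDerivAt h D ((fun t : ℝ => z₀ + t • v) 0) := by simpa using hdiff
      exact hdiff'.comp_hasDerivAt 0 hc
    have hgi : HasDerivAt (fun t : ℝ => h (z₀ + t • v) i) (D v i) 0 := by
      have := (ContinuousLinearMap.proj (R := ℝ) (φ := fun _ : Fin d => ℝ)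
        i).hasFDerivAt.comp_hasDerivAt 0 hcomp
      exact this
    have hcont : ContinuousAt (fun t : ℝ => z₀ + t • v) 0 := by fun_prop
    have hmem : ∀ᶠ t in nhds (0:ℝ), z₀ + t • v ∈ Z := by
      have := hcont.preimage_mem_nhds (hZopen.mem_nhds (by simpa using hz₀))
      exact this
    have heq : (fun t : ℝ => h (z₀ + t • v) i) =ᶠ[nhds (0:ℝ)]
        (fun _ => h z₀ i) := by
      filter_upwards [hmem] with t ht
      exact hdep i hi _ ht z₀ hz₀ (fun j hj => by simp [hv j hj])
    have hzero : HasDerivAt (fun t : ℝ => h (z₀ + t • v) i) 0 0 :=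
      (hasDerivAt_const (0:ℝ) (h z₀ i)).congr_of_eventuallyEq heq
    exact hgi.unique hzero
  -- Linear algebra: build an injective linear map (Sᶜ → ℝ) →ₗ (Tᶜ → ℝ).
  let ext : (↥(Sᶜ : Finset (Fin d)) → ℝ) →ₗ[ℝ] (Fin d → ℝ) :=
    { toFun := fun x j => if hj : j ∈ (Sᶜ : Finset (Fin d)) then x ⟨j, hj⟩ else 0
      map_add' := by intro x y; funext j; by_cases hj : j ∈ S <;> simp [hj]
      map_smul' := by intro c x; funext j; by_cases hj : j ∈ S <;> simp [hj] }
  let res : (Fin d → ℝ) →ₗ[ℝ] (↥(Tᶜ : Finset (Fin d)) → ℝ) :=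
    LinearMap.funLeft ℝ ℝ (fun i => (i : Fin d))
  let F : (↥(Sᶜ : Finset (Fin d)) → ℝ) →ₗ[ℝ] (↥(Tᶜ : Finset (Fin d)) → ℝ) :=
    res ∘ₗ (D : (Fin d → ℝ) →L[ℝ] (Fin d → ℝ)).toLinearMap ∘ₗ ext
  have hFinj : Function.Injective F := by
    rw [← LinearMap.ker_eq_bot, LinearMap.ker_eq_bot']
    intro x hx
    have hvS : ∀ j ∈ S, ext x j = 0 := by
      intro j hj
      simp only [ext, LinearMap.coe_mk, AddHom.coe_mk]
      rw [dif_neg (by simpa using hj)]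
    have hDv : D (ext x) = 0 := by
      funext i
      by_cases hi : i ∈ T
      · exact key (ext x) hvS i hi
      · have := congrFun hx ⟨i, by simpa using hi⟩
        simpa [F, res, LinearMap.funLeft] using this
    have hv0 : ext x = 0 := (hinv z₀ hz₀).injective (by simpa [hDdef] using hDv)
    funext j
    have := congrFun hv0 (j : Fin d)
    simpa [ext, Finset.mem_compl.mp j.2] using this
  have hdim := LinearMap.finrank_le_finrank_of_injective hFinj
  have h1 : Module.finrank ℝ (↥(Sᶜ : Finset (Fin d)) → ℝ) = (Sᶜ : Finset (Fin d)).card := by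
    rw [Module.finrank_fintype_fun_eq_card, Fintype.card_coe]
  have h2 : Module.finrank ℝ (↥(Tᶜ : Finset (Fin d)) → ℝ) = (Tᶜ : Finset (Fin d)).card := by
    rw [Module.finrank_fintype_fun_eq_card, Fintype.card_coe]
  rw [h1, h2] at hdim
  have hS : S.card ≤ d := by simpa using Finset.card_le_card (Finset.subset_univ S)
  have hT : T.card ≤ d := by simpa using Finset.card_le_card (Finset.subset_univ T)
  rw [Finset.card_compl, Finset.card_compl] at hdim
  simp only [Fintype.card_fin] at hdim
  omega
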